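/- arXiv:1404.3884 — 2 statements merged into one kernel-verified Lean document; each statement's English description precedes it below -/
import Mathlib

section
/- Let V, H₁ be self-adjoint operators, w, z vectors of operators satisfying the sector bound w†w ≤ (1/γ²)z†z + δ for real γ > 0, δ ≥ 0, and let H₂ be a self-adjoint operator satisfying the commutator decomposition [V,H₂] = [V,z†]w - w†[z,V]. Define 𝒢(V) = -i[V, H₁+H₂] + ℒ(V) where ℒ(V) = ½L†[V,L] + ½[L†,V]L for a coupling vector L. Then for any real τ > 0, 𝒢(V) ≤ -i[V,H₁] + ℒ(V) + τ²[V,z†][z,V] + (1/(γ²τ²))z†z + δ/τ². -/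
open ContinuousLinearMap

section AuxLemmas

variable {H : Type*} [NormedAddCommGroup H] [InnerProductSpace ℂ H] [CompleteSpace H]

lemma mul_adjoint_isPositive (T : H →L[ℂ] H) : (T * adjoint T).IsPositive := by
  simpa [ContinuousLinearMap.mul_def, ContinuousLinearMap.one_def] using (isPositive_one (E := H) (𝕜 := ℂ)).conj_adjoint T

lemma isPositive_smul_real {c : ℝ} (hc : 0 ≤ c) {T : H →L[ℂ] H} (hT : T.IsPositive) :
    (c • T).IsPositive := by
  refine ⟨?_, fun x => ?_⟩
  · have := hT.1
    intro x y
    have h := this x y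
    simp only [ContinuousLinearMap.coe_coe] at h ⊢
    simp only [coe_smul', Pi.smul_apply, ← Complex.coe_smul, inner_smul_left, inner_smul_right,
      Complex.conj_ofReal, h]
  · have h := hT.2 x
    simp only [reApplyInnerSelf_apply, coe_smul', Pi.smul_apply] at *
    rw [show c • T x = (c : ℂ) • T x from (Complex.coe_smul c (T x)).symm,
      inner_smul_left, Complex.conj_ofReal]
    simpa [Complex.re_ofReal_mul] using mul_nonneg hc h

lemma isPositive_sum {n : ℕ} (f : Fin n → H →L[ℂ] H) (hf : ∀ i, (f i).IsPositive) :
    (∑ i, f i).IsPositive := by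
  classical
  exact Finset.sum_induction f _ (fun a b ha hb => ha.add hb) isPositive_zero (fun i _ => hf i)

end AuxLemmas

set_option maxHeartbeats 2000000 in
set_option synthInstance.maxHeartbeats 1000000 in
/-- The central estimate in the proof of Lemma 4 of the paper:
bound on the generator `𝒢(V)` under a sector-bounded quadratic perturbation. -/
theorem stmt_2 {H : Type*} [NormedAddCommGroup H] [InnerProductSpace ℂ H] [CompleteSpace H]
    {m p : ℕ} (w z : Fin m → H →L[ℂ] H) (L : Fin p → H →L[ℂ] H)
    (V H₁ H₂ : H →L[ℂ] H)
    (hV : IsSelfAdjoint V) (hH₁ : IsSelfAdjoint H₁) (hH₂ : IsSelfAdjoint H₂)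
    (γ δ τ : ℝ) (hγ : 0 < γ) (hδ : 0 ≤ δ) (hτ : 0 < τ)
    (hsector : ((γ^2)⁻¹ • ∑ i, adjoint (z i) * z i + δ • (1 : H →L[ℂ] H)
        - ∑ i, adjoint (w i) * w i).IsPositive)
    (hdecomp : V * H₂ - H₂ * V
        = ∑ i, (V * adjoint (z i) - adjoint (z i) * V) * w i
          - ∑ i, adjoint (w i) * (z i * V - V * z i)) :
    ((-Complex.I • (V * H₁ - H₁ * V)
        + ((1/2 : ℂ) • ∑ k, adjoint (L k) * (V * L k - L k * V)
          + (1/2 : ℂ) • ∑ k, (adjoint (L k) * V - V * adjoint (L k)) * L k)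
        + (τ^2 : ℝ) • ∑ i, (V * adjoint (z i) - adjoint (z i) * V) * (z i * V - V * z i)
        + ((γ^2 * τ^2 : ℝ)⁻¹) • ∑ i, adjoint (z i) * z i
        + (δ / τ^2 : ℝ) • (1 : H →L[ℂ] H))
      - (-Complex.I • (V * (H₁ + H₂) - (H₁ + H₂) * V)
        + ((1/2 : ℂ) • ∑ k, adjoint (L k) * (V * L k - L k * V)
          + (1/2 : ℂ) • ∑ k, (adjoint (L k) * V - V * adjoint (L k)) * L k))).IsPositive := by
  set a : Fin m → H →L[ℂ] H := fun i => V * adjoint (z i) - adjoint (z i) * V with ha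
  set b : Fin m → H →L[ℂ] H := fun i => z i * V - V * z i with hb
  set M : Fin m → H →L[ℂ] H := fun i => (τ : ℂ) • a i - (Complex.I / τ) • adjoint (w i) with hM
  have hτ' : (τ : ℂ) ≠ 0 := Complex.ofReal_ne_zero.mpr hτ.ne'
  have hadj : ∀ i, adjoint (M i) = (τ : ℂ) • b i + (Complex.I / τ) • w i := by
    intro i
    simp only [hM, ha, hb, ← star_eq_adjoint, star_sub, star_smul, star_mul, star_star,
      hV.star_eq, Complex.star_def, Complex.conj_ofReal, map_div₀, Complex.conj_I]
    module
  have hexp : ∀ i, M i * adjoint (M i)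
      = (τ^2 : ℝ) • (a i * b i) + Complex.I • (a i * w i)
        - Complex.I • (adjoint (w i) * b i) + ((τ^2 : ℝ)⁻¹) • (adjoint (w i) * w i) := by
    intro i
    rw [hadj]
    simp only [hM, sub_mul, mul_add, smul_mul_assoc, mul_smul_comm, smul_smul]
    match_scalars <;> field_simp <;> push_cast <;> ring_nf <;> simp [Complex.I_sq, hτ']
  have hsum : ∑ i, M i * adjoint (M i)
      = (τ^2 : ℝ) • (∑ i, a i * b i) + Complex.I • (∑ i, a i * w i)
        - Complex.I • (∑ i, adjoint (w i) * b i)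
        + ((τ^2 : ℝ)⁻¹) • (∑ i, adjoint (w i) * w i) := by
    simp only [hexp, Finset.sum_add_distrib, Finset.sum_sub_distrib, Finset.smul_sum]
  have hkey :
      ((-Complex.I • (V * H₁ - H₁ * V)
        + ((1/2 : ℂ) • ∑ k, adjoint (L k) * (V * L k - L k * V)
          + (1/2 : ℂ) • ∑ k, (adjoint (L k) * V - V * adjoint (L k)) * L k)
        + (τ^2 : ℝ) • ∑ i, (V * adjoint (z i) - adjoint (z i) * V) * (z i * V - V * z i)
        + ((γ^2 * τ^2 : ℝ)⁻¹) • ∑ i, adjoint (z i) * z i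
        + (δ / τ^2 : ℝ) • (1 : H →L[ℂ] H))
      - (-Complex.I • (V * (H₁ + H₂) - (H₁ + H₂) * V)
        + ((1/2 : ℂ) • ∑ k, adjoint (L k) * (V * L k - L k * V)
          + (1/2 : ℂ) • ∑ k, (adjoint (L k) * V - V * adjoint (L k)) * L k)))
      = ∑ i, M i * adjoint (M i)
        + ((τ^2 : ℝ)⁻¹) • ((γ^2)⁻¹ • ∑ i, adjoint (z i) * z i + δ • (1 : H →L[ℂ] H)
            - ∑ i, adjoint (w i) * w i) := by
    rw [hsum]
    have hd : Complex.I • (V * H₂ - H₂ * V)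
        = Complex.I • (∑ i, a i * w i) - Complex.I • (∑ i, adjoint (w i) * b i) := by
      rw [hdecomp, smul_sub]
    have hexpand : Complex.I • (V * H₂ - H₂ * V)
        = Complex.I • (V * H₂) - Complex.I • (H₂ * V) := smul_sub _ _ _
    rw [hexpand] at hd
    simp only [mul_add, add_mul]
    rw [show (-Complex.I • (V * H₁ - H₁ * V)
        + ((1/2 : ℂ) • ∑ k, adjoint (L k) * (V * L k - L k * V)
          + (1/2 : ℂ) • ∑ k, (adjoint (L k) * V - V * adjoint (L k)) * L k)
        + (τ^2 : ℝ) • ∑ i, a i * b i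
        + ((γ^2 * τ^2 : ℝ)⁻¹) • ∑ i, adjoint (z i) * z i
        + (δ / τ^2 : ℝ) • (1 : H →L[ℂ] H))
      - (-Complex.I • (V * H₁ + V * H₂ - (H₁ * V + H₂ * V))
        + ((1/2 : ℂ) • ∑ k, adjoint (L k) * (V * L k - L k * V)
          + (1/2 : ℂ) • ∑ k, (adjoint (L k) * V - V * adjoint (L k)) * L k))
      = (Complex.I • (V * H₂) - Complex.I • (H₂ * V))
        + (τ^2 : ℝ) • ∑ i, a i * b i
        + ((γ^2 * τ^2 : ℝ)⁻¹) • ∑ i, adjoint (z i) * z i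
        + (δ / τ^2 : ℝ) • (1 : H →L[ℂ] H) from by module]
    rw [hd]
    match_scalars <;> field_simp <;> ring
  rw [hkey]
  exact (isPositive_sum _ fun i => mul_adjoint_isPositive (M i)).add
    (isPositive_smul_real (by positivity) hsector)
end

section
/- Let w₁, w₂, z be scalar operators, V a self-adjoint operator, and μ = [z,[V,z]]. Suppose w₁w₁* ≤ (1/γ²)zz* + δ₁ and w₂w₂* ≤ δ₂ for reals γ > 0, δ₁, δ₂ ≥ 0, and [V,H₂] = [V,z]w₁* - w₁[z*,V] + ½μ w₂* - ½ w₂ μ* for a self-adjoint operator H₂. Then for any τ > 0: -i[V,H₂] ≤ τ²[V,z][z*,V] + (1/(γ²τ²))zz* + δ₁/τ² + ¼μμ* + δ₂. -/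
open ContinuousLinearMap

set_option maxHeartbeats 1000000
set_option synthInstance.maxHeartbeats 400000

lemma isPositive_mul_adjoint_self' {H : Type*} [NormedAddCommGroup H]
    [InnerProductSpace ℂ H] [CompleteSpace H] (T : H →L[ℂ] H) :
    (T * adjoint T).IsPositive := by
  exact isPositive_self_comp_adjoint T

lemma ContinuousLinearMap.IsPositive.real_smul' {H : Type*} [NormedAddCommGroup H]
    [InnerProductSpace ℂ H] [CompleteSpace H] {T : H →L[ℂ] H}
    (hT : T.IsPositive) {c : ℝ} (hc : 0 ≤ c) : (c • T).IsPositive := by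
  have h := hT.smul_of_nonneg (c := (c:ℂ)) (by exact_mod_cast hc)
  rwa [Complex.coe_smul] at h

/-- Combination of inequalities (64)-(67) in the proof of Lemma 7
(non-quadratic Hamiltonian perturbations) of the paper. -/
theorem stmt_3 {H : Type*} [NormedAddCommGroup H] [InnerProductSpace ℂ H] [CompleteSpace H]
    (w₁ w₂ z V H₂ μ : H →L[ℂ] H)
    (hV : IsSelfAdjoint V) (hH₂ : IsSelfAdjoint H₂)
    (hμ : μ = z * (V * z - z * V) - (V * z - z * V) * z)
    (γ δ₁ δ₂ τ : ℝ) (hγ : 0 < γ) (hδ₁ : 0 ≤ δ₁) (hδ₂ : 0 ≤ δ₂) (hτ : 0 < τ)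
    (hsector₁ : ((γ^2)⁻¹ • (z * adjoint z) + δ₁ • (1 : H →L[ℂ] H)
        - w₁ * adjoint w₁).IsPositive)
    (hsector₂ : (δ₂ • (1 : H →L[ℂ] H) - w₂ * adjoint w₂).IsPositive)
    (hdecomp : V * H₂ - H₂ * V
        = (V * z - z * V) * adjoint w₁ - w₁ * (adjoint z * V - V * adjoint z)
          + (1/2 : ℂ) • (μ * adjoint w₂) - (1/2 : ℂ) • (w₂ * adjoint μ)) :
    (((τ^2 : ℝ) • ((V * z - z * V) * (adjoint z * V - V * adjoint z))
        + ((γ^2 * τ^2 : ℝ)⁻¹) • (z * adjoint z)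
        + (δ₁ / τ^2 : ℝ) • (1 : H →L[ℂ] H)
        + (1/4 : ℝ) • (μ * adjoint μ)
        + δ₂ • (1 : H →L[ℂ] H))
      - (-Complex.I • (V * H₂ - H₂ * V))).IsPositive := by
  have hτ2 : (τ:ℂ) ≠ 0 := by exact_mod_cast hτ.ne'
  have key : (((τ:ℂ) • (V * z - z * V) - ((Complex.I/τ) • w₁)) *
        adjoint ((τ:ℂ) • (V * z - z * V) - ((Complex.I/τ) • w₁))
      + (((1/2:ℂ) • μ - Complex.I • w₂) * adjoint ((1/2:ℂ) • μ - Complex.I • w₂))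
      + (τ^2:ℝ)⁻¹ • ((γ^2)⁻¹ • (z * adjoint z) + δ₁ • (1 : H →L[ℂ] H) - w₁ * adjoint w₁)
      + (δ₂ • (1 : H →L[ℂ] H) - w₂ * adjoint w₂)).IsPositive := by
    exact ((( isPositive_mul_adjoint_self' _).add
      (isPositive_mul_adjoint_self' _)).add
      (hsector₁.real_smul' (by positivity))).add hsector₂
  have heq : (((τ^2 : ℝ) • ((V * z - z * V) * (adjoint z * V - V * adjoint z))
        + ((γ^2 * τ^2 : ℝ)⁻¹) • (z * adjoint z)
        + (δ₁ / τ^2 : ℝ) • (1 : H →L[ℂ] H)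
        + (1/4 : ℝ) • (μ * adjoint μ)
        + δ₂ • (1 : H →L[ℂ] H))
      - (-Complex.I • (V * H₂ - H₂ * V)))
    = (((τ:ℂ) • (V * z - z * V) - ((Complex.I/τ) • w₁)) *
        adjoint ((τ:ℂ) • (V * z - z * V) - ((Complex.I/τ) • w₁)))
      + (((1/2:ℂ) • μ - Complex.I • w₂) * adjoint ((1/2:ℂ) • μ - Complex.I • w₂))
      + (τ^2:ℝ)⁻¹ • ((γ^2)⁻¹ • (z * adjoint z) + δ₁ • (1 : H →L[ℂ] H) - w₁ * adjoint w₁)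
      + (δ₂ • (1 : H →L[ℂ] H) - w₂ * adjoint w₂) := by
    rw [hdecomp]
    simp only [← star_eq_adjoint, star_sub, star_smul, star_mul, hV.star_eq, map_ofNat,
      Complex.star_def, map_div₀, Complex.conj_I, Complex.conj_ofReal, smul_sub, smul_add,
      sub_mul, mul_sub, add_mul, mul_add, smul_mul_assoc, mul_smul_comm, smul_smul, mul_one,
      one_mul, map_one, mul_assoc]
    match_scalars <;> field_simp <;> push_cast <;> ring_nf <;> simp [Complex.I_sq, hτ2]
  rw [heq]
  exact key
end
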